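/- Z-measurement rule: let G be a simple graph on Fin n, i a vertex, and g := G − i the graph obtained by deleting vertex i and all its edges (its graph states live on the (n−1) qubits indexed by Fin n ∖ {i}). Then for every label string ℓ, |G_ℓ⟩ = 2^{−1/2} · ∑_{z∈{0,1}} (−1)^{z·ℓ_i} |z⟩_i ⊗ |g_{ℓ^{(z)}}⟩, where ℓ^{(z)} is the restriction of ℓ to Fin n ∖ {i} with ℓ_j replaced by ℓ_j ⊕ z for each j ∈ N_i, and the right-hand side is interpreted in H_n via the canonical identification of the qubit i factor with the remaining qubits. -/

import Mathlib

noncomputable section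

open scoped ComplexConjugate

/-- The Hilbert space of qubits indexed by `V`, as functions from bit strings to `ℂ`. -/
abbrev QState (V : Type) : Type := (V → Fin 2) → ℂ

/-- The diagonal operator with diagonal entries `d`. -/
def diagOp {V : Type} (d : (V → Fin 2) → ℂ) : QState V →ₗ[ℂ] QState V where
  toFun f := fun x => d x * f x
  map_add' f g := by funext x; simp [mul_add]
  map_smul' c f := by funext x; simp [smul_eq_mul]; ring

/-- The Pauli `Z` operator on qubit `i`. -/
def Zop {V : Type} (i : V) : QState V →ₗ[ℂ] QState V :=
  diagOp fun x => (-1 : ℂ) ^ (x i : ℕ)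

/-- The Pauli `X` operator on qubit `i` (bit flip). -/
def Xop {V : Type} [DecidableEq V] (i : V) : QState V →ₗ[ℂ] QState V where
  toFun f := fun x => f (Function.update x i (x i + 1))
  map_add' f g := rfl
  map_smul' c f := rfl

/-- The phase gate `S` on qubit `i`, sending `|x⟩` to `(-i)^(x i) |x⟩`. -/
def Sop {V : Type} (i : V) : QState V →ₗ[ℂ] QState V :=
  diagOp fun x => (-Complex.I) ^ (x i : ℕ)

/-- The Pauli `Y` operator on qubit `i`, `Y = i·X·Z`. -/
def Yop {V : Type} [DecidableEq V] (i : V) : QState V →ₗ[ℂ] QState V :=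
  Complex.I • (Xop i ∘ₗ Zop i)

/-- `qVal G x` is the number of edges of `G` both of whose endpoints carry bit 1 in `x`. -/
def qVal {V : Type} (G : SimpleGraph V) (x : V → Fin 2) : ℕ :=
  Nat.card {e : Sym2 V // e ∈ G.edgeSet ∧ ∀ v ∈ e, x v = 1}

/-- The graph state `|G⟩`, with amplitudes `2^{-n/2} (-1)^{q_G(x)}`. -/
def graphState {V : Type} [Fintype V] (G : SimpleGraph V) : QState V :=
  fun x => (((Real.sqrt 2)⁻¹ ^ Fintype.card V : ℝ) : ℂ) * (-1 : ℂ) ^ qVal G x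

/-- The labeled/encoded graph state `|𝒢_ℓ⟩ = (∏_i Z_i^{ℓ_i}) (∏_{j ∈ Vsq} S_j) |G⟩`,
with square-vertex set `Vsq`. -/
def encSq {V : Type} [Fintype V] (G : SimpleGraph V) (Vsq : Set V) (ℓ : V → Fin 2) : QState V :=
  fun x => (-1 : ℂ) ^ Nat.card {i : V // ℓ i = 1 ∧ x i = 1}
    * (-Complex.I) ^ Nat.card {j : V // j ∈ Vsq ∧ x j = 1}
    * graphState G x

/-- The encoded graph state `|G_ℓ⟩` (no square vertices). -/
def encG {V : Type} [Fintype V] (G : SimpleGraph V) (ℓ : V → Fin 2) : QState V :=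
  encSq G ∅ ℓ

open Classical in
/-- The stabilizer operator of vertex `i`: `X_i ∏_{j ∈ N_i} Z_j` for circular vertices,
`Y_i ∏_{j ∈ N_i} Z_j` for square vertices (`i ∈ Vsq`). -/
def Kop {V : Type} [DecidableEq V] (G : SimpleGraph V) (Vsq : Set V) (i : V) :
    QState V →ₗ[ℂ] QState V :=
  (if i ∈ Vsq then Yop i else Xop i) ∘ₗ
    diagOp fun x => (-1 : ℂ) ^ Nat.card {j : V // G.Adj i j ∧ x j = 1}

/-- Merge a bit string on `P` with a bit string on the complement of `P`. -/
def mergeBits {V : Type} [DecidableEq V] (P : Finset V) (a : {i // i ∈ P} → Fin 2)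
    (c : {i // i ∉ P} → Fin 2) : V → Fin 2 :=
  fun i => if h : i ∈ P then a ⟨i, h⟩ else c ⟨i, h⟩

/-- The reduced density matrix of the pure state `ψ` on the qubits in `P`:
`(a, b) ↦ ∑_c ⟨a⊔c|ψ⟩⟨ψ|b⊔c⟩`. -/
def red {V : Type} [Fintype V] [DecidableEq V] (P : Finset V) (ψ : QState V) :
    ({i // i ∈ P} → Fin 2) → ({i // i ∈ P} → Fin 2) → ℂ :=
  fun a b => ∑ c : {i // i ∉ P} → Fin 2, ψ (mergeBits P a c) * conj (ψ (mergeBits P b c))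

/-- The computational basis vector `|y⟩`. -/
def basisVec {V : Type} [Fintype V] [DecidableEq V] (y : V → Fin 2) : QState V :=
  fun x => if x = y then 1 else 0

/-- The matrix entry `⟨x|A|y⟩` of an operator. -/
def opEntry {V : Type} [Fintype V] [DecidableEq V] (A : QState V →ₗ[ℂ] QState V)
    (x y : V → Fin 2) : ℂ := A (basisVec y) x

/-- `A` acts trivially outside `P`: it equals `M ⊗ Id` for some operator `M` on the
qubits in `P`. -/
def trivialOutside {V : Type} [Fintype V] [DecidableEq V] (P : Finset V)
    (A : QState V →ₗ[ℂ] QState V) : Prop :=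
  ∃ M : ({i // i ∈ P} → Fin 2) → ({i // i ∈ P} → Fin 2) → ℂ,
    ∀ a b c c', opEntry A (mergeBits P a c) (mergeBits P b c') = if c = c' then M a b else 0

/-- The product `∏_{i ∈ T} K_i` of (commuting) operators, taken in sorted order. -/
def prodOps {V : Type} [LinearOrder V] (T : Finset V)
    (K : V → QState V →ₗ[ℂ] QState V) : QState V →ₗ[ℂ] QState V :=
  (T.sort (· ≤ ·)).foldr (fun i acc => K i ∘ₗ acc) LinearMap.id



lemma negpow_congr (a b : ℕ) (h : a % 2 = b % 2) : (-1:ℂ)^a = (-1:ℂ)^b := by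
  rcases Nat.even_or_odd a with h1 | h1
  · rw [Even.neg_one_pow h1, Even.neg_one_pow (Nat.even_iff.2 (by rw [Nat.even_iff] at h1; omega))]
  · rw [Odd.neg_one_pow h1, Odd.neg_one_pow (Nat.odd_iff.2 (by rw [Nat.odd_iff] at h1; omega))]

lemma card_empty_and {V : Type} (P : V → Prop) :
    Nat.card {j : V // j ∈ (∅ : Set V) ∧ P j} = 0 := by
  have : IsEmpty {j : V // j ∈ (∅ : Set V) ∧ P j} := ⟨fun ⟨j, hj, _⟩ => hj⟩
  exact Nat.card_of_isEmpty

lemma prod_if_card {α : Type} [Fintype α] (P : α → Prop) [DecidablePred P] (c : ℂ) :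
    (∏ j : α, (if P j then c else 1)) = c ^ Nat.card {j : α // P j} := by
  rw [Nat.card_eq_fintype_card, Fintype.card_subtype, ← Finset.prod_const,
    Finset.prod_filter]

open Classical in
lemma qval_split (n : ℕ) (G : SimpleGraph (Fin n)) (i : Fin n) (x : Fin n → Fin 2) :
    qVal G x = qVal (G.induce {j | j ≠ i}) (fun j => x j.1)
      + (if x i = 1 then Nat.card {j : Fin n // G.Adj i j ∧ x j = 1} else 0) := by
  classical
  have hsplit := Finset.card_filter_add_card_filter_not
    (s := Finset.univ.filter (fun e : Sym2 (Fin n) => e ∈ G.edgeSet ∧ ∀ v ∈ e, x v = 1))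
    (p := fun e => i ∈ e)
  rw [Finset.filter_filter, Finset.filter_filter] at hsplit
  have h1 : qVal (G.induce {j | j ≠ i}) (fun j => x j.1)
      = (Finset.univ.filter (fun e : Sym2 (Fin n) =>
        (e ∈ G.edgeSet ∧ ∀ v ∈ e, x v = 1) ∧ ¬ i ∈ e)).card := by
    rw [qVal, Nat.card_eq_fintype_card, Fintype.card_subtype]
    refine Finset.card_bij (fun e _ => Sym2.map Subtype.val e) ?_ ?_ ?_
    · intro e he
      induction e using Sym2.ind with
      | _ a b =>
        simp only [Finset.mem_filter, Finset.mem_univ, true_and,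
          SimpleGraph.mem_edgeSet, Sym2.mem_iff, SimpleGraph.induce_eq_coe_induce_top,
          SimpleGraph.comap_adj, Function.Embedding.coe_subtype] at he ⊢
        obtain ⟨hadj, hall⟩ := he
        rw [Sym2.map_pair_eq]
        simp only [SimpleGraph.mem_edgeSet, Sym2.mem_iff]
        have hGab : G.Adj a.1 b.1 := by
          exact hadj.2.2
        refine ⟨⟨hGab, ?_⟩, ?_⟩
        · rintro v (rfl | rfl)
          · exact hall a (Or.inl rfl)
          · exact hall b (Or.inr rfl)
        · intro h
          rcases h with h | h
          · exact a.2 h.symm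
          · exact b.2 h.symm
    · intro e1 _ e2 _ h
      exact Sym2.map.injective Subtype.val_injective h
    · intro e he
      simp only [Finset.mem_filter, Finset.mem_univ, true_and] at he
      induction e using Sym2.ind with
      | _ a b =>
        obtain ⟨⟨hedge, hall⟩, hni⟩ := he
        rw [Sym2.mem_iff] at hni
        push_neg at hni
        refine ⟨s(⟨a, fun h => hni.1 h.symm⟩, ⟨b, fun h => hni.2 h.symm⟩), ?_, ?_⟩
        · simp only [Finset.mem_filter, Finset.mem_univ, true_and,
            SimpleGraph.mem_edgeSet, Sym2.mem_iff]
          rw [SimpleGraph.mem_edgeSet] at hedge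
          constructor
          · simpa using hedge
          · rintro v (rfl | rfl)
            · exact hall a (by rw [Sym2.mem_iff]; left; rfl)
            · exact hall b (by rw [Sym2.mem_iff]; right; rfl)
        · simp [Sym2.map_pair_eq]
  have h2 : (Finset.univ.filter (fun e : Sym2 (Fin n) =>
      (e ∈ G.edgeSet ∧ ∀ v ∈ e, x v = 1) ∧ i ∈ e)).card
      = if x i = 1 then Nat.card {j : Fin n // G.Adj i j ∧ x j = 1} else 0 := by
    by_cases hxi : x i = 1
    · rw [if_pos hxi, Nat.card_eq_fintype_card, Fintype.card_subtype]
      refine (Finset.card_bij (fun j _ => s(i, j)) ?_ ?_ ?_).symm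
      · intro j hj
        simp only [Finset.mem_filter, Finset.mem_univ, true_and] at hj ⊢
        refine ⟨⟨?_, ?_⟩, ?_⟩
        · rw [SimpleGraph.mem_edgeSet]; exact hj.1
        · rintro v hv
          rw [Sym2.mem_iff] at hv
          rcases hv with rfl | rfl
          · exact hxi
          · exact hj.2
        · rw [Sym2.mem_iff]; left; rfl
      · intro j1 _ j2 _ h
        exact Sym2.congr_right.mp h
      · intro e he
        simp only [Finset.mem_filter, Finset.mem_univ, true_and] at he
        induction e using Sym2.ind with
        | _ a b =>
          obtain ⟨⟨hedge, hall⟩, hmem⟩ := he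
          rw [SimpleGraph.mem_edgeSet] at hedge
          rw [Sym2.mem_iff] at hmem
          rcases hmem with rfl | rfl
          · refine ⟨b, ?_, rfl⟩
            simp only [Finset.mem_filter, Finset.mem_univ, true_and]
            exact ⟨hedge, hall b (by rw [Sym2.mem_iff]; right; rfl)⟩
          · refine ⟨a, ?_, Sym2.eq_swap⟩
            simp only [Finset.mem_filter, Finset.mem_univ, true_and]
            exact ⟨hedge.symm, hall a (by rw [Sym2.mem_iff]; left; rfl)⟩
    · rw [if_neg hxi]
      rw [Finset.card_eq_zero, Finset.eq_empty_iff_forall_notMem]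
      intro e he
      simp only [Finset.mem_filter, Finset.mem_univ, true_and] at he
      exact hxi (he.1.2 i he.2)
  conv_lhs => rw [qVal, Nat.card_eq_fintype_card, Fintype.card_subtype]
  rw [h1]
  rw [h2] at hsplit
  omega


lemma factor_eq (adj : Prop) [Decidable adj] (a b c : Fin 2) :
    (if b = 1 ∧ c = 1 then (-1:ℂ) else 1) * (if adj ∧ c = 1 then (-1:ℂ)^(a:ℕ) else 1)
    = (if (if adj then b + a else b) = 1 ∧ c = 1 then -1 else 1) := by
  by_cases h : adj <;> by_cases hc : c = 1 <;>
    rcases (by omega : a = 0 ∨ a = 1) with rfl | rfl <;>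
    rcases (by omega : b = 0 ∨ b = 1) with rfl | rfl <;>
    simp [h, hc] <;> norm_num [show ((1:Fin 2) + 1 : Fin 2) = 0 from rfl]

lemma ifactor_eq (a b : Fin 2) :
    (if b = 1 ∧ a = 1 then (-1:ℂ) else 1) = (-1:ℂ) ^ ((a:ℕ) * (b:ℕ)) := by
  rcases (by omega : a = 0 ∨ a = 1) with rfl | rfl <;>
    rcases (by omega : b = 0 ∨ b = 1) with rfl | rfl <;> norm_num

/-- Z-measurement rule: for `g := G − i` (the induced subgraph on the
other vertices), `|G_ℓ⟩ = 2^{−1/2} ∑_z (−1)^{z·ℓ_i} |z⟩_i ⊗ |g_{ℓ^{(z)}}⟩`, where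
`ℓ^{(z)}` flips the label of each neighbour of `i` by `z`.  Stated pointwise at each
computational basis point `x` (where only the term `z = x i` survives). -/
theorem z_measurement_rule (n : ℕ) (G : SimpleGraph (Fin n)) [DecidableRel G.Adj]
    (i : Fin n) (ℓ : Fin n → Fin 2) (x : Fin n → Fin 2) :
    encG G ℓ x =
      (((Real.sqrt 2)⁻¹ : ℝ) : ℂ) * (-1 : ℂ) ^ ((x i : ℕ) * (ℓ i : ℕ)) *
        encG (G.induce {j | j ≠ i})
          (fun j => if G.Adj i j.1 then ℓ j.1 + x i else ℓ j.1)
          (fun j => x j.1) := by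
  classical
  have hn : 0 < n := i.pos
  unfold encG encSq graphState
  rw [card_empty_and, card_empty_and, pow_zero]
  set r : ℝ := (Real.sqrt 2)⁻¹ with hr
  have hcard : Fintype.card ↥{j : Fin n | j ≠ i} = n - 1 := by
    have h := Fintype.card_subtype_compl (fun j : Fin n => j = i)
    rw [Fintype.card_subtype_eq i, Fintype.card_fin] at h
    calc Fintype.card ↥{j : Fin n | j ≠ i}
        = Fintype.card {j : Fin n // ¬ j = i} := Fintype.card_congr (Equiv.refl _)
      _ = n - 1 := h
  rw [hcard]
  have hpow : ((r ^ n : ℝ) : ℂ) = (r : ℂ) * ((r ^ (n - 1) : ℝ) : ℂ) := by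
    push_cast
    rw [← pow_succ']
    congr 1
    omega
  rw [Fintype.card_fin, hpow, qval_split n G i x, pow_add]
  -- the sign identity
  set L := Nat.card {j : Fin n // ℓ j = 1 ∧ x j = 1} with hL
  set c := if x i = 1 then Nat.card {j : Fin n // G.Adj i j ∧ x j = 1} else 0 with hc
  set L' := Nat.card {j : ↥{j : Fin n | j ≠ i} //
    (if G.Adj i j.1 then ℓ j.1 + x i else ℓ j.1) = 1 ∧ x j.1 = 1} with hL'
  have key : (-1:ℂ)^L * (-1:ℂ)^c = (-1:ℂ)^((x i : ℕ) * (ℓ i : ℕ)) * (-1:ℂ)^L' := by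
    have e1 : (-1:ℂ)^L = ∏ j : Fin n, (if ℓ j = 1 ∧ x j = 1 then (-1:ℂ) else 1) :=
      (prod_if_card _ _).symm
    have e2 : (-1:ℂ)^c
        = ∏ j : Fin n, (if G.Adj i j ∧ x j = 1 then ((-1:ℂ))^(x i : ℕ) else 1) := by
      rw [prod_if_card (fun j => G.Adj i j ∧ x j = 1) ((-1:ℂ)^(x i : ℕ)), ← pow_mul, hc]
      rcases (by omega : x i = 0 ∨ x i = 1) with h | h <;> simp [h]
    have e3 : (-1:ℂ)^L' = ∏ j ∈ Finset.univ.erase i,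
        (if (if G.Adj i j then ℓ j + x i else ℓ j) = 1 ∧ x j = 1 then (-1:ℂ) else 1) := by
      rw [hL', ← prod_if_card, Finset.prod_subtype (p := fun j : Fin n => j ∈ {j : Fin n | j ≠ i})
        (Finset.univ.erase i)
        (fun j => by simp [Set.mem_setOf_eq, Finset.mem_erase])
        (fun j => if (if G.Adj i j then ℓ j + x i else ℓ j) = 1 ∧ x j = 1 then (-1:ℂ) else 1)]
    rw [e1, e2, e3, ← Finset.prod_mul_distrib,
      ← Finset.mul_prod_erase Finset.univ _ (Finset.mem_univ i)]
    have hi : (if ℓ i = 1 ∧ x i = 1 then (-1:ℂ) else 1) *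
        (if G.Adj i i ∧ x i = 1 then ((-1:ℂ))^(x i : ℕ) else 1)
        = (-1:ℂ)^((x i : ℕ) * (ℓ i : ℕ)) := by
      have h2 : (if G.Adj i i ∧ x i = 1 then ((-1:ℂ))^(x i : ℕ) else 1) = 1 :=
        if_neg (fun h => G.irrefl h.1)
      rw [h2, mul_one, ifactor_eq]
    rw [hi]
    congr 1
    refine Finset.prod_congr rfl (fun j _ => ?_)
    exact factor_eq (G.Adj i j) (x i) (ℓ j) (x j)
  push_cast at hpow ⊢
  linear_combination ((r : ℂ) * (r : ℂ)^(n-1) *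
    (-1:ℂ)^(qVal (G.induce {j : Fin n | j ≠ i}) (fun j => x j.1))) * key

end
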